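/- Let (x, y) be a test point from the Gaussian-cluster data model, x = y(√γ v + √(1−γ) n) with n ~ N(0_d, (1/d)(I_d − v vᵀ)) and y uniform on {±1}. Let w = a_v v + z be a fixed linear classifier with a_v ∈ ℝ and ⟨z, v⟩ = 0, and assume a_v ≥ 0. Then the misclassification probability satisfies both P(y⟨w, x⟩ ≤ 0) ≤ exp(−(d/2)·(γ/(1−γ))·(a_v²/‖z‖²)) and P(y⟨w, x⟩ ≤ 0) ≥ 1/2 − √(dγ/(2π(1−γ))) · (a_v/‖z‖). -/

import Mathlib

open MeasureTheory ProbabilityTheory Real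
open scoped ENNReal RealInnerProductSpace
open scoped NNReal

noncomputable section

abbrev Vec (d : ℕ) : Type := EuclideanSpace ℝ (Fin d)

/-- The standard Gaussian measure on `ℝ^d`. -/
def stdGaussian (d : ℕ) : Measure (Vec d) :=
  (Measure.pi fun _ : Fin d => gaussianReal 0 1).map
    (MeasurableEquiv.toLp 2 (Fin d → ℝ))

/-- The Gaussian measure `N(0, (1/d)(I_d - v vᵀ))` on `ℝ^d`. -/
def noiseMeasure (d : ℕ) (v : Vec d) : Measure (Vec d) :=
  (stdGaussian d).map fun g => (Real.sqrt d)⁻¹ • (g - ⟪g, v⟫ • v)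

/-- The uniform distribution on `{1, -1} ⊆ ℝ`. -/
def signMeasure : Measure ℝ :=
  (2 : ℝ≥0∞)⁻¹ • Measure.dirac (1 : ℝ) + (2 : ℝ≥0∞)⁻¹ • Measure.dirac (-1 : ℝ)

def frobNorm {d k : ℕ} (W : Fin k → Vec d) : ℝ :=
  Real.sqrt (∑ j, ‖W j‖ ^ 2)

def euclNorm {k : ℕ} (x : Fin k → ℝ) : ℝ := Real.sqrt (∑ i, x i ^ 2)

lemma gaussianPDFReal_mul (a b : ℝ≥0) (ha : a ≠ 0) (hb : b ≠ 0) (x t : ℝ) :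
    gaussianPDFReal 0 a x * gaussianPDFReal x b t =
      gaussianPDFReal 0 (a + b) t *
        gaussianPDFReal ((a : ℝ) * t / ((a : ℝ) + b)) (a * b / (a + b)) x := by
  have hA : (0:ℝ) < a := lt_of_le_of_ne a.coe_nonneg (by exact_mod_cast (Ne.symm ha))
  have hB : (0:ℝ) < b := lt_of_le_of_ne b.coe_nonneg (by exact_mod_cast (Ne.symm hb))
  have hS : (0:ℝ) < (a:ℝ) + b := by linarith
  unfold gaussianPDFReal
  have hcoe : ((a * b / (a + b) : ℝ≥0) : ℝ) = (a:ℝ) * b / ((a:ℝ) + b) := by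
    push_cast; ring
  have hcoe2 : ((a + b : ℝ≥0) : ℝ) = (a:ℝ) + b := by push_cast; ring
  rw [hcoe, hcoe2]
  have hconst : √(2 * π * a) * √(2 * π * b)
      = √(2 * π * ((a:ℝ) + b)) * √(2 * π * ((a:ℝ) * b / ((a:ℝ) + b))) := by
    rw [← Real.sqrt_mul (by positivity), ← Real.sqrt_mul (by positivity)]
    congr 1
    field_simp
  have hexp : rexp (-(x - 0)^2 / (2 * a)) * rexp (-(t - x)^2 / (2 * b))
      = rexp (-(t - 0)^2 / (2 * ((a:ℝ) + b))) *
        rexp (-(x - (a:ℝ) * t / ((a:ℝ) + b))^2 / (2 * ((a:ℝ) * b / ((a:ℝ) + b)))) := by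
    rw [← Real.exp_add, ← Real.exp_add]
    congr 1
    field_simp
    ring
  calc (√(2 * π * a))⁻¹ * rexp (-(x - 0)^2 / (2 * a)) *
        ((√(2 * π * b))⁻¹ * rexp (-(t - x)^2 / (2 * b)))
      = (√(2 * π * a) * √(2 * π * b))⁻¹ *
        (rexp (-(x - 0)^2 / (2 * a)) * rexp (-(t - x)^2 / (2 * b))) := by
        rw [mul_inv]; ring
    _ = (√(2 * π * ((a:ℝ) + b)) * √(2 * π * ((a:ℝ) * b / ((a:ℝ) + b))))⁻¹ *
        (rexp (-(t - 0)^2 / (2 * ((a:ℝ) + b))) *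
          rexp (-(x - (a:ℝ) * t / ((a:ℝ) + b))^2 / (2 * ((a:ℝ) * b / ((a:ℝ) + b))))) := by
        rw [hconst, hexp]
    _ = _ := by rw [mul_inv]; ring

lemma gaussian_conv (a b : ℝ≥0) :
    Measure.map (fun p : ℝ × ℝ => p.1 + p.2) ((gaussianReal 0 a).prod (gaussianReal 0 b))
      = gaussianReal 0 (a + b) := by
  by_cases ha : a = 0
  · subst ha
    rw [gaussianReal_zero_var, Measure.dirac_prod,
      Measure.map_map (by fun_prop) (by fun_prop)]
    have : (fun p : ℝ × ℝ => p.1 + p.2) ∘ Prod.mk (0:ℝ) = fun y : ℝ => (0:ℝ) + y := rfl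
    rw [this, gaussianReal_map_const_add, zero_add, zero_add]
  by_cases hb : b = 0
  · subst hb
    rw [gaussianReal_zero_var, Measure.prod_dirac,
      Measure.map_map (by fun_prop) (by fun_prop)]
    have : (fun p : ℝ × ℝ => p.1 + p.2) ∘ (fun x : ℝ => (x, (0:ℝ))) = fun x : ℝ => x + 0 := rfl
    rw [this, gaussianReal_map_add_const, zero_add, add_zero]
  have hab : a + b ≠ 0 := by positivity
  have hv' : a * b / (a + b) ≠ 0 := by positivity
  have hm : Measurable (Function.uncurry fun x t : ℝ => gaussianPDF x b t) := by
    unfold Function.uncurry gaussianPDF gaussianPDFReal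
    apply Measurable.ennreal_ofReal
    fun_prop
  ext s hs
  rw [Measure.map_apply (by fun_prop) hs,
    Measure.prod_apply (hs.preimage (by fun_prop))]
  have step1 : ∀ x : ℝ,
      (gaussianReal 0 b) (Prod.mk x ⁻¹' ((fun p : ℝ × ℝ => p.1 + p.2) ⁻¹' s))
        = ∫⁻ t in s, gaussianPDF x b t := by
    intro x
    have hpre : Prod.mk x ⁻¹' ((fun p : ℝ × ℝ => p.1 + p.2) ⁻¹' s) = (fun y => x + y) ⁻¹' s := rfl
    rw [hpre, ← Measure.map_apply (by fun_prop) hs, gaussianReal_map_const_add, zero_add,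
      gaussianReal_apply _ hb]
  simp_rw [step1]
  rw [gaussianReal_of_var_ne_zero 0 ha,
    lintegral_withDensity_eq_lintegral_mul _ (measurable_gaussianPDF 0 a)
      (by exact hm.lintegral_prod_right')]
  simp only [Pi.mul_apply]
  have step2 : ∀ x : ℝ, gaussianPDF 0 a x * ∫⁻ t in s, gaussianPDF x b t
      = ∫⁻ t in s, gaussianPDF 0 a x * gaussianPDF x b t := by
    intro x
    rw [← lintegral_const_mul _ (by fun_prop)]
  simp_rw [step2]
  rw [lintegral_lintegral_swap (by exact (((measurable_gaussianPDF 0 a).comp measurable_fst).mul hm).aemeasurable)]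
  have step3 : ∀ t : ℝ, (∫⁻ x, gaussianPDF 0 a x * gaussianPDF x b t)
      = gaussianPDF 0 (a + b) t := by
    intro t
    simp_rw [gaussianPDF, ← ENNReal.ofReal_mul (gaussianPDFReal_nonneg 0 a _),
      gaussianPDFReal_mul a b ha hb _ t,
      ENNReal.ofReal_mul (gaussianPDFReal_nonneg 0 (a+b) t)]
    rw [lintegral_const_mul _ (by exact (measurable_gaussianPDFReal _ _).ennreal_ofReal),
      lintegral_gaussianPDFReal_eq_one _ hv', mul_one]
  simp_rw [step3]
  rw [gaussianReal_apply 0 hab s]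

lemma map_sum_pi_gaussian : ∀ (n : ℕ) (c : Fin n → ℝ),
    Measure.map (fun f : Fin n → ℝ => ∑ i, c i * f i) (Measure.pi fun _ => gaussianReal 0 1)
      = gaussianReal 0 (∑ i, NNReal.mk (c i ^ 2) (sq_nonneg _)) := by
  intro n
  induction n with
  | zero =>
      intro c
      rw [Measure.pi_of_empty, Measure.map_dirac' (by fun_prop : Measurable (fun f : Fin 0 → ℝ => ∑ i, c i * f i))]
      simp [gaussianReal_zero_var]
  | succ n ih =>
      intro c
      have hmp := measurePreserving_piFinSuccAbove
        (fun _ : Fin (n + 1) => gaussianReal 0 1) 0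
      set e := MeasurableEquiv.piFinSuccAbove (fun _ : Fin (n + 1) => ℝ) 0 with he
      have hcomp : (fun f : Fin (n+1) → ℝ => ∑ i, c i * f i)
          = ((fun q : ℝ × ℝ => q.1 + q.2) ∘
              Prod.map (fun x : ℝ => c 0 * x) (fun f : Fin n → ℝ => ∑ j, c j.succ * f j)) ∘ e := by
        funext f
        rw [Fin.sum_univ_succ]
        simp [e, Fin.zero_succAbove, Fin.tail]
      rw [hcomp, ← Measure.map_map (by fun_prop) (by fun_prop), hmp.map_eq,
        ← Measure.map_map (by fun_prop) (by fun_prop),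
        ← Measure.map_prod_map _ _ (by fun_prop) (by fun_prop),
        gaussianReal_map_const_mul, ih]
      simp only [mul_zero, mul_one]
      rw [gaussian_conv]
      congr 1
      rw [Fin.sum_univ_succ]

lemma gaussian_tail_upper (V : ℝ≥0) (hV : V ≠ 0) (t : ℝ) (ht : 0 ≤ t) :
    gaussianReal 0 V (Set.Iic (-t)) ≤ ENNReal.ofReal (Real.exp (-t ^ 2 / (2 * V))) := by
  have hVpos : (0:ℝ) < V := lt_of_le_of_ne V.coe_nonneg (by exact_mod_cast (Ne.symm hV))
  rw [gaussianReal_apply_eq_integral 0 hV]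
  apply ENNReal.ofReal_le_ofReal
  have hpt : ∀ x ∈ Set.Iic (-t),
      gaussianPDFReal 0 V x ≤ rexp (-t ^ 2 / (2 * V)) * gaussianPDFReal (-t) V x := by
    intro x hx
    simp only [Set.mem_Iic] at hx
    unfold gaussianPDFReal
    rw [mul_comm (rexp _), mul_assoc _ (rexp _) (rexp _), ← Real.exp_add]
    apply mul_le_mul_of_nonneg_left _ (by positivity)
    apply Real.exp_le_exp.2
    rw [← add_div]
    apply div_le_div_of_nonneg_right _ (by positivity)  -- might be wrong name
    nlinarith [sq_nonneg (x + t)]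
  calc ∫ x in Set.Iic (-t), gaussianPDFReal 0 V x
      ≤ ∫ x in Set.Iic (-t), rexp (-t ^ 2 / (2 * V)) * gaussianPDFReal (-t) V x := by
        apply setIntegral_mono_on
          ((integrable_gaussianPDFReal 0 V).integrableOn)
          (((integrable_gaussianPDFReal (-t) V).const_mul _).integrableOn)
          measurableSet_Iic hpt
    _ = rexp (-t ^ 2 / (2 * V)) * ∫ x in Set.Iic (-t), gaussianPDFReal (-t) V x := by
        rw [integral_const_mul]
    _ ≤ rexp (-t ^ 2 / (2 * V)) * ∫ x, gaussianPDFReal (-t) V x := by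
        apply mul_le_mul_of_nonneg_left _ (le_of_lt (Real.exp_pos _))
        exact setIntegral_le_integral (integrable_gaussianPDFReal (-t) V)
          (ae_of_all _ (gaussianPDFReal_nonneg (-t) V))
    _ = rexp (-t ^ 2 / (2 * V)) := by rw [integral_gaussianPDFReal_eq_one _ hV, mul_one]

lemma gaussian_tail_lower (V : ℝ≥0) (hV : V ≠ 0) (t : ℝ) (ht : 0 ≤ t) :
    ENNReal.ofReal (1 / 2 - t / Real.sqrt (2 * π * V)) ≤ gaussianReal 0 V (Set.Iic (-t)) := by
  have hVpos : (0:ℝ) < V := lt_of_le_of_ne V.coe_nonneg (by exact_mod_cast (Ne.symm hV))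
  set μ := gaussianReal 0 V with hμ
  have hsym : μ (Set.Ioi 0) ≤ μ (Set.Iic 0) := by
    have hmap : Measure.map (fun x : ℝ => (-1 : ℝ) * x) μ = μ := by
      rw [hμ, gaussianReal_map_const_mul]
      norm_num
    have hpre : (fun x : ℝ => (-1 : ℝ) * x) ⁻¹' Set.Ioi 0 = Set.Iio 0 := by
      ext x; simp
    calc μ (Set.Ioi 0) = Measure.map (fun x : ℝ => (-1:ℝ) * x) μ (Set.Ioi 0) := by rw [hmap]
      _ = μ (Set.Iio 0) := by rw [Measure.map_apply (by fun_prop) measurableSet_Ioi, hpre]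
      _ ≤ μ (Set.Iic 0) := measure_mono Set.Iio_subset_Iic_self
  have h12 : ENNReal.ofReal (1 / 2) ≤ μ (Set.Iic 0) := by
    have hcompl : μ (Set.Iic 0) + μ (Set.Ioi 0) = 1 := by
      rw [← Set.compl_Iic]
      rw [measure_add_measure_compl measurableSet_Iic]
      exact measure_univ
    have h2 : (1 : ℝ≥0∞) ≤ μ (Set.Iic 0) * 2 := by
      calc (1:ℝ≥0∞) = μ (Set.Iic 0) + μ (Set.Ioi 0) := hcompl.symm
        _ ≤ μ (Set.Iic 0) + μ (Set.Iic 0) := add_le_add_right hsym _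
        _ = μ (Set.Iic 0) * 2 := by ring
    have : ENNReal.ofReal (1 / 2) = (1 : ℝ≥0∞) / 2 := by
      rw [ENNReal.ofReal_div_of_pos two_pos]
      norm_num
    rw [this, ENNReal.div_le_iff_le_mul (Or.inl two_ne_zero) (Or.inl ENNReal.ofNat_ne_top)]
    exact h2
  have hioc : μ (Set.Ioc (-t) 0) ≤ ENNReal.ofReal (t / Real.sqrt (2 * π * V)) := by
    rw [hμ, gaussianReal_apply 0 hV]
    calc ∫⁻ x in Set.Ioc (-t) 0, gaussianPDF 0 V x
        ≤ ∫⁻ _ in Set.Ioc (-t) 0, ENNReal.ofReal ((Real.sqrt (2 * π * V))⁻¹) := by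
          apply lintegral_mono
          intro x
          unfold gaussianPDF gaussianPDFReal
          apply ENNReal.ofReal_le_ofReal
          calc (√(2 * π * V))⁻¹ * rexp (-(x - 0) ^ 2 / (2 * V))
              ≤ (√(2 * π * V))⁻¹ * 1 := by
                apply mul_le_mul_of_nonneg_left _ (by positivity)
                apply Real.exp_le_one_iff.2
                apply div_nonpos_of_nonpos_of_nonneg (neg_nonpos.2 (sq_nonneg _)) (by positivity)
            _ = (√(2 * π * V))⁻¹ := mul_one _
      _ = ENNReal.ofReal ((Real.sqrt (2 * π * V))⁻¹) * volume (Set.Ioc (-t) 0) := by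
          rw [setLIntegral_const]
      _ = ENNReal.ofReal ((Real.sqrt (2 * π * V))⁻¹) * ENNReal.ofReal t := by
          rw [Real.volume_Ioc]
          norm_num
      _ = ENNReal.ofReal (t / Real.sqrt (2 * π * V)) := by
          rw [← ENNReal.ofReal_mul (by positivity)]
          rw [div_eq_inv_mul]
  have hs_nonneg : 0 ≤ t / Real.sqrt (2 * π * V) := by positivity
  rw [ENNReal.ofReal_sub _ hs_nonneg, tsub_le_iff_right]
  calc ENNReal.ofReal (1 / 2) ≤ μ (Set.Iic 0) := h12
    _ ≤ μ (Set.Iic (-t) ∪ Set.Ioc (-t) 0) := by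
        apply measure_mono
        intro x hx
        simp only [Set.mem_Iic] at hx
        rcases le_or_gt x (-t) with h | h
        · exact Or.inl h
        · exact Or.inr ⟨h, hx⟩
    _ ≤ μ (Set.Iic (-t)) + μ (Set.Ioc (-t) 0) := measure_union_le _ _
    _ ≤ μ (Set.Iic (-t)) + ENNReal.ofReal (t / Real.sqrt (2 * π * V)) :=
        add_le_add_right hioc _

instance : IsFiniteMeasure signMeasure := by
  constructor
  simp [signMeasure]


set_option maxHeartbeats 2000000 in
/-- generalization bounds for a linear classifier `w = a_v v + z` (with `z ⊥ v`,
`a_v ≥ 0`) on a test point `x = y(√γ v + √(1-γ) n)`, `y` uniform on `{±1}` independent of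
`n ~ N(0,(1/d)(I - vvᵀ))`:
`P(y⟨w,x⟩ ≤ 0) ≤ exp(-(d/2)(γ/(1-γ))(a_v²/‖z‖²))` and
`P(y⟨w,x⟩ ≤ 0) ≥ 1/2 - √(dγ/(2π(1-γ))) (a_v/‖z‖)`. -/
theorem linear_classifier_generalization_bounds
    (d : ℕ) (γ a_v : ℝ) (v z : Vec d)
    (hv : ‖v‖ = 1) (hγ0 : 0 < γ) (hγ1 : γ < 1)
    (hzv : ⟪z, v⟫ = 0) (hz : z ≠ 0) (ha : 0 ≤ a_v) :
    ((noiseMeasure d v).prod signMeasure)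
        {ω : Vec d × ℝ | ω.2 * ⟪a_v • v + z,
            ω.2 • (Real.sqrt γ • v + Real.sqrt (1 - γ) • ω.1)⟫ ≤ 0}
      ≤ ENNReal.ofReal
          (Real.exp (-((d : ℝ) / 2) * (γ / (1 - γ)) * (a_v ^ 2 / ‖z‖ ^ 2))) ∧
    ((noiseMeasure d v).prod signMeasure)
        {ω : Vec d × ℝ | ω.2 * ⟪a_v • v + z,
            ω.2 • (Real.sqrt γ • v + Real.sqrt (1 - γ) • ω.1)⟫ ≤ 0}
      ≥ ENNReal.ofReal
          (1 / 2 - Real.sqrt ((d : ℝ) * γ / (2 * Real.pi * (1 - γ))) * (a_v / ‖z‖)) := by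
  classical
  have hd : 0 < d := by
    rcases Nat.eq_zero_or_pos d with h | h
    · subst h; exact absurd (Subsingleton.elim z 0) hz
    · exact h
  have hdR : (0:ℝ) < d := by exact_mod_cast hd
  have h1γ : (0:ℝ) < 1 - γ := by linarith
  have hzn : (0:ℝ) < ‖z‖ := norm_pos_iff.2 hz
  have hsd : (0:ℝ) < Real.sqrt d := Real.sqrt_pos.2 hdR
  have hs1γ : (0:ℝ) < Real.sqrt (1 - γ) := Real.sqrt_pos.2 h1γ
  set w : Vec d := a_v • v + z with hw
  set c : ℝ := Real.sqrt γ * a_v * Real.sqrt d / Real.sqrt (1 - γ) with hc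
  have hc0 : 0 ≤ c := by positivity
  set V : ℝ≥0 := ∑ i, NNReal.mk (z i ^ 2) (sq_nonneg _) with hV
  have hVcoe : (V : ℝ) = ‖z‖ ^ 2 := by
    have h1 : ‖z‖ ^ 2 = ∑ i, z i ^ 2 := by
      rw [EuclideanSpace.norm_eq, Real.sq_sqrt (by positivity)]
      simp [Real.norm_eq_abs, sq_abs]
    rw [h1, hV]
    push_cast
    rfl
  have hVpos : (0:ℝ) < V := by rw [hVcoe]; positivity
  have hVne : V ≠ 0 := fun h => by simp [h] at hVpos
  -- inner product computations
  have hwv : ⟪w, v⟫ = a_v := by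
    rw [hw, inner_add_left, real_inner_smul_left, real_inner_self_eq_norm_sq, hv, hzv]
    ring
  have hwg : ∀ g : Vec d, ⟪w, g⟫ = a_v * ⟪v, g⟫ + ⟪z, g⟫ := by
    intro g
    rw [hw, inner_add_left, real_inner_smul_left]
  have hinner : ∀ n : Vec d,
      (⟪w, Real.sqrt γ • v + Real.sqrt (1 - γ) • n⟫ : ℝ)
        = Real.sqrt γ * a_v + Real.sqrt (1 - γ) * ⟪w, n⟫ := by
    intro n
    rw [inner_add_right, real_inner_smul_right, real_inner_smul_right, hwv]
  -- the event set on noise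
  set A : Set (Vec d) := {n : Vec d | Real.sqrt γ * a_v + Real.sqrt (1 - γ) * ⟪w, n⟫ ≤ 0}
    with hA
  have hcontwn : Continuous fun n : Vec d => (⟪w, n⟫ : ℝ) := continuous_const.inner continuous_id
  have hAm : MeasurableSet A := by
    apply measurableSet_le _ measurable_const
    exact (continuous_const.add (continuous_const.mul hcontwn)).measurable
  set S : Set (Vec d × ℝ) := {ω : Vec d × ℝ | ω.2 * ⟪w,
      ω.2 • (Real.sqrt γ • v + Real.sqrt (1 - γ) • ω.1)⟫ ≤ 0} with hS
  have hSm : MeasurableSet S := by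
    apply measurableSet_le _ measurable_const
    apply Measurable.mul measurable_snd
    apply Continuous.measurable
    exact continuous_const.inner (continuous_snd.smul
      (continuous_const.add (by fun_prop)))
  -- slice measure
  have hslice : ∀ n : Vec d,
      signMeasure {y : ℝ | y * ⟪w, y • (Real.sqrt γ • v + Real.sqrt (1 - γ) • n)⟫ ≤ 0}
        = A.indicator (fun _ => (1 : ℝ≥0∞)) n := by
    intro n
    have hset : ∀ y : ℝ, y * ⟪w, y • (Real.sqrt γ • v + Real.sqrt (1 - γ) • n)⟫
        = y ^ 2 * (Real.sqrt γ * a_v + Real.sqrt (1 - γ) * ⟪w, n⟫) := by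
      intro y
      rw [real_inner_smul_right, hinner n]
      ring
    have hms : MeasurableSet {y : ℝ | y * ⟪w, y • (Real.sqrt γ • v + Real.sqrt (1 - γ) • n)⟫ ≤ 0} := by
      have : {y : ℝ | y * ⟪w, y • (Real.sqrt γ • v + Real.sqrt (1 - γ) • n)⟫ ≤ 0}
          = {y : ℝ | y ^ 2 * (Real.sqrt γ * a_v + Real.sqrt (1 - γ) * ⟪w, n⟫) ≤ 0} := by
        ext y; simp only [Set.mem_setOf_eq, hset y]
      rw [this]
      apply measurableSet_le _ measurable_const
      fun_prop
    simp only [signMeasure, Measure.coe_add, Measure.coe_smul, Pi.add_apply, Pi.smul_apply,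
      Measure.dirac_apply' _ hms, smul_eq_mul]
    by_cases hk : Real.sqrt γ * a_v + Real.sqrt (1 - γ) * ⟪w, n⟫ ≤ 0
    · have h1 : (1:ℝ) ∈ {y : ℝ | y * ⟪w, y • (Real.sqrt γ • v + Real.sqrt (1 - γ) • n)⟫ ≤ 0} := by
        simp only [Set.mem_setOf_eq, hset 1]; nlinarith
      have h2 : (-1:ℝ) ∈ {y : ℝ | y * ⟪w, y • (Real.sqrt γ • v + Real.sqrt (1 - γ) • n)⟫ ≤ 0} := by
        simp only [Set.mem_setOf_eq, hset (-1)]; nlinarith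
      have hnA : n ∈ A := hk
      rw [Set.indicator_of_mem hnA, Set.indicator_of_mem h1, Set.indicator_of_mem h2]
      simp only [Pi.one_apply]
      rw [mul_one]
      exact ENNReal.inv_two_add_inv_two
    · have h1 : (1:ℝ) ∉ {y : ℝ | y * ⟪w, y • (Real.sqrt γ • v + Real.sqrt (1 - γ) • n)⟫ ≤ 0} := by
        simp only [Set.mem_setOf_eq, hset 1, one_pow, one_mul]; exact hk
      have h2 : (-1:ℝ) ∉ {y : ℝ | y * ⟪w, y • (Real.sqrt γ • v + Real.sqrt (1 - γ) • n)⟫ ≤ 0} := by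
        simp only [Set.mem_setOf_eq, hset (-1)]
        intro hcon; apply hk; nlinarith
      have hnA : n ∉ A := hk
      rw [Set.indicator_of_notMem hnA, Set.indicator_of_notMem h1, Set.indicator_of_notMem h2]
      simp
  -- Fubini reduction
  have hprod : ((noiseMeasure d v).prod signMeasure) S = noiseMeasure d v A := by
    rw [Measure.prod_apply hSm]
    have hcongr : ∀ n : Vec d, signMeasure (Prod.mk n ⁻¹' S)
        = A.indicator (fun _ => (1 : ℝ≥0∞)) n := fun n => hslice n
    rw [lintegral_congr hcongr, lintegral_indicator hAm]
    simp
  -- noise measure of A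
  have hcontf : Continuous fun g : Vec d => (Real.sqrt d)⁻¹ • (g - ⟪g, v⟫ • v) :=
    by fun_prop
  have hwfg : ∀ g : Vec d, (⟪w, (Real.sqrt d)⁻¹ • (g - ⟪g, v⟫ • v)⟫ : ℝ)
      = (Real.sqrt d)⁻¹ * ⟪z, g⟫ := by
    intro g
    rw [real_inner_smul_right, inner_sub_right, real_inner_smul_right, hwv, hwg g,
      real_inner_comm g v]
    ring
  have hBm : MeasurableSet {g : Vec d | (⟪z, g⟫ : ℝ) ≤ -c} := by
    apply measurableSet_le _ measurable_const
    exact (continuous_const.inner continuous_id).measurable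
  have hBset : (fun g : Vec d => (Real.sqrt d)⁻¹ • (g - ⟪g, v⟫ • v)) ⁻¹' A
      = {g : Vec d | (⟪z, g⟫ : ℝ) ≤ -c} := by
    ext g
    simp only [Set.mem_preimage, hA, Set.mem_setOf_eq, hwfg g]
    constructor
    · intro h
      have heq : Real.sqrt d / Real.sqrt (1 - γ) *
          (Real.sqrt γ * a_v + Real.sqrt (1 - γ) * ((Real.sqrt d)⁻¹ * ⟪z, g⟫))
          = Real.sqrt γ * a_v * Real.sqrt d / Real.sqrt (1 - γ) + ⟪z, g⟫ := by
        field_simp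
      have h2 := mul_le_mul_of_nonneg_left h (le_of_lt (div_pos hsd hs1γ))
      rw [heq, mul_zero] at h2
      rw [hc]
      linarith
    · intro h
      have h' : Real.sqrt (1 - γ) / Real.sqrt d *
          (⟪z, g⟫ + Real.sqrt γ * a_v * Real.sqrt d / Real.sqrt (1 - γ)) ≤ 0 := by
        apply mul_nonpos_of_nonneg_of_nonpos (by positivity)
        rw [hc] at h
        linarith
      have heq2 : Real.sqrt (1 - γ) / Real.sqrt d *
          (⟪z, g⟫ + Real.sqrt γ * a_v * Real.sqrt d / Real.sqrt (1 - γ))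
          = Real.sqrt (1 - γ) * ((Real.sqrt d)⁻¹ * ⟪z, g⟫) + Real.sqrt γ * a_v := by
        field_simp
      rw [heq2] at h'
      linarith
  have hnoise : noiseMeasure d v A = gaussianReal 0 V (Set.Iic (-c)) := by
    rw [noiseMeasure, Measure.map_apply hcontf.measurable hAm, hBset, _root_.stdGaussian,
      Measure.map_apply (MeasurableEquiv.measurable _) hBm]
    have hpre : MeasurableEquiv.toLp 2 (Fin d → ℝ) ⁻¹' {g : Vec d | (⟪z, g⟫ : ℝ) ≤ -c}
        = (fun h : Fin d → ℝ => ∑ i, z i * h i) ⁻¹' Set.Iic (-c) := by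
      ext h
      simp [PiLp.inner_apply, RCLike.inner_apply, MeasurableEquiv.toLp_apply, mul_comm]
    rw [hpre, ← Measure.map_apply (by fun_prop) measurableSet_Iic, map_sum_pi_gaussian, ← hV]
  have htotal : ((noiseMeasure d v).prod signMeasure) S = gaussianReal 0 V (Set.Iic (-c)) := by
    rw [hprod, hnoise]
  constructor
  · rw [htotal]
    have harg : -c ^ 2 / (2 * (V:ℝ)) = -((d : ℝ) / 2) * (γ / (1 - γ)) * (a_v ^ 2 / ‖z‖ ^ 2) := by
      have hcsq : c ^ 2 = γ * a_v ^ 2 * d / (1 - γ) := by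
        rw [hc, div_pow, mul_pow, mul_pow, Real.sq_sqrt hγ0.le, Real.sq_sqrt hdR.le,
          Real.sq_sqrt h1γ.le]
      rw [hcsq, hVcoe]
      field_simp
    calc gaussianReal 0 V (Set.Iic (-c)) ≤ ENNReal.ofReal (Real.exp (-c ^ 2 / (2 * (V:ℝ)))) :=
          gaussian_tail_upper V hVne c hc0
      _ = _ := by rw [harg]
  · rw [ge_iff_le, htotal]
    have harg2 : Real.sqrt ((d:ℝ) * γ / (2 * π * (1 - γ))) * (a_v / ‖z‖)
        = c / Real.sqrt (2 * π * (V:ℝ)) := by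
      have h2π : (0:ℝ) < 2 * π := by positivity
      have hs2π : (0:ℝ) < Real.sqrt (2 * π) := Real.sqrt_pos.2 h2π
      rw [hVcoe, Real.sqrt_mul h2π.le (‖z‖ ^ 2), Real.sqrt_sq hzn.le,
        Real.sqrt_div (by positivity : (0:ℝ) ≤ (d:ℝ) * γ), Real.sqrt_mul hdR.le γ,
        Real.sqrt_mul h2π.le (1 - γ), hc]
      field_simp
    calc ENNReal.ofReal (1 / 2 - Real.sqrt ((d:ℝ) * γ / (2 * π * (1 - γ))) * (a_v / ‖z‖))
        = ENNReal.ofReal (1 / 2 - c / Real.sqrt (2 * π * (V:ℝ))) := by rw [harg2]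
      _ ≤ gaussianReal 0 V (Set.Iic (-c)) := gaussian_tail_lower V hVne c hc0
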